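/- Let (n_t) and (m_t) be sequences of positive integers with n_t ≤ m_t, n_t → ∞, and n_t/m_t → c̄ ∈ (0,1) as t → ∞. Then μ0(1, n_t, m_t) → e·(1−c̄)^{(1−c̄)/c̄} as t → ∞. -/

import Mathlib

open Finset Filter Topology
open Finset

/-- Exact `p`-th moment of the GLRT statistic under `H₀`. -/
noncomputable def mu0 (p n m : ℕ) : ℝ :=
  Real.Gamma ((m : ℝ) * n) / ((n : ℝ) ^ p * Real.Gamma ((m : ℝ) * n - p)) *
    ∏ j ∈ Finset.range n,
      Real.Gamma ((m : ℝ) - n + 1 - p / n + j) / Real.Gamma ((m : ℝ) - n + 1 + j)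




-- convexity bounds on log Gamma
lemma logGamma_diff_le {x ε : ℝ} (hx : 1 < x) (hε0 : 0 < ε) (hε1 : ε < 1) :
    Real.log (Real.Gamma (x - ε)) ≤ Real.log (Real.Gamma x) - ε * Real.log (x - 1) := by
  have hx1 : (0:ℝ) < x - 1 := by linarith
  have h := Real.convexOn_log_Gamma.2 (Set.mem_Ioi.2 (by linarith : (0:ℝ) < x))
    (Set.mem_Ioi.2 hx1) (by linarith : (0:ℝ) ≤ 1 - ε) hε0.le (by ring)
  simp only [smul_eq_mul, Function.comp] at h
  have heq : (1 - ε) * x + ε * (x - 1) = x - ε := by ring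
  rw [heq] at h
  have hG : Real.Gamma x = (x - 1) * Real.Gamma (x - 1) := by
    have := Real.Gamma_add_one (ne_of_gt hx1)
    rwa [sub_add_cancel] at this
  have hGpos : 0 < Real.Gamma (x - 1) := Real.Gamma_pos_of_pos hx1
  have hlog : Real.log (Real.Gamma x) = Real.log (x - 1) + Real.log (Real.Gamma (x - 1)) := by
    rw [hG, Real.log_mul (ne_of_gt hx1) (ne_of_gt hGpos)]
  nlinarith [h, hlog]

lemma le_logGamma_diff {x ε : ℝ} (hx : 1 < x) (hε0 : 0 < ε) (hε1 : ε < 1) :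
    Real.log (Real.Gamma x) ≤ Real.log (Real.Gamma (x - ε)) + ε * Real.log (x - ε) := by
  have hxε : (0:ℝ) < x - ε := by linarith
  have h := Real.convexOn_log_Gamma.2 (Set.mem_Ioi.2 hxε)
    (Set.mem_Ioi.2 (by linarith : (0:ℝ) < x - ε + 1)) (by linarith : (0:ℝ) ≤ 1 - ε) hε0.le (by ring)
  simp only [smul_eq_mul, Function.comp] at h
  have heq : (1 - ε) * (x - ε) + ε * (x - ε + 1) = x := by ring
  rw [heq] at h
  have hG : Real.Gamma (x - ε + 1) = (x - ε) * Real.Gamma (x - ε) :=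
    Real.Gamma_add_one (ne_of_gt hxε)
  have hGpos : 0 < Real.Gamma (x - ε) := Real.Gamma_pos_of_pos hxε
  have hlog : Real.log (Real.Gamma (x - ε + 1))
      = Real.log (x - ε) + Real.log (Real.Gamma (x - ε)) := by
    rw [hG, Real.log_mul (ne_of_gt hxε) (ne_of_gt hGpos)]
  nlinarith [h, hlog]

lemma mu0_one_eq (n m : ℕ) (hn2 : 2 ≤ n) (hnm : n < m) :
    mu0 1 n m = ((m : ℝ) - 1 / n) *
      ∏ j ∈ Finset.range n,
        Real.Gamma ((m : ℝ) - n + 1 - 1 / n + j) / Real.Gamma ((m : ℝ) - n + 1 + j) := by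
  have hN : (2:ℝ) ≤ (n:ℝ) := by exact_mod_cast hn2
  have hM : (n:ℝ) < (m:ℝ) := by exact_mod_cast hnm
  have h1 : (0:ℝ) < (m:ℝ) * n - 1 := by nlinarith
  have hg : 0 < Real.Gamma ((m:ℝ) * n - 1) := Real.Gamma_pos_of_pos h1
  have hΓ : Real.Gamma ((m:ℝ) * n) = ((m:ℝ) * n - 1) * Real.Gamma ((m:ℝ) * n - 1) := by
    rw [show (m:ℝ) * n = ((m:ℝ) * n - 1) + 1 by ring, Real.Gamma_add_one (ne_of_gt h1)]
    norm_num
  have hfac : Real.Gamma ((m:ℝ) * n) / ((n:ℝ) ^ (1:ℕ) * Real.Gamma ((m:ℝ) * n - 1))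
      = (m:ℝ) - 1 / n := by
    rw [hΓ]
    field_simp
  unfold mu0
  rw [show ((m:ℝ) * n - ((1:ℕ):ℝ)) = (m:ℝ) * n - 1 by norm_num, hfac]
  norm_num

lemma mu0_prod_pos (n m : ℕ) (hn2 : 2 ≤ n) (hnm : n < m) :
    ∀ j ∈ Finset.range n,
      0 < Real.Gamma ((m : ℝ) - n + 1 - 1 / n + j) / Real.Gamma ((m : ℝ) - n + 1 + j) := by
  intro j _
  have hN : (2:ℝ) ≤ (n:ℝ) := by exact_mod_cast hn2
  have hx₀ : (1:ℝ) ≤ (m:ℝ) - n := by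
    have : (n:ℝ) + 1 ≤ (m:ℝ) := by exact_mod_cast hnm
    linarith
  have hj : (0:ℝ) ≤ (j:ℝ) := Nat.cast_nonneg j
  have hε : (1:ℝ)/n ≤ 1/2 := by
    apply div_le_div_of_nonneg_left (by norm_num) (by norm_num) hN
  exact div_pos (Real.Gamma_pos_of_pos (by linarith)) (Real.Gamma_pos_of_pos (by linarith))

lemma mu0_pos (n m : ℕ) (hn2 : 2 ≤ n) (hnm : n < m) : 0 < mu0 1 n m := by
  rw [mu0_one_eq n m hn2 hnm]
  have hN : (2:ℝ) ≤ (n:ℝ) := by exact_mod_cast hn2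
  have hM : (n:ℝ) < (m:ℝ) := by exact_mod_cast hnm
  have hε : (1:ℝ)/n ≤ 1/2 := by
    apply div_le_div_of_nonneg_left (by norm_num) (by norm_num) hN
  exact mul_pos (by linarith) (Finset.prod_pos (mu0_prod_pos n m hn2 hnm))

lemma mu0_log_bound (n m : ℕ) (hn2 : 2 ≤ n) (hnm : n < m) :
    |Real.log (mu0 1 n m) - (Real.log ((m:ℝ) - 1/n)
        - (1/n) * ((m:ℝ) * Real.log m - ((m:ℝ) - n) * Real.log ((m:ℝ) - n) - n))|
      ≤ (1/n) * (Real.log m - Real.log ((m:ℝ) - n)) := by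
  have hN' : (2:ℝ) ≤ (n:ℝ) := by exact_mod_cast hn2
  set N : ℝ := (n:ℝ) with hNdef
  set M : ℝ := (m:ℝ) with hMdef
  have hN : (2:ℝ) ≤ N := hN'
  have hx₀1 : (1:ℝ) ≤ M - N := by
    have : (n:ℝ) + 1 ≤ (m:ℝ) := by exact_mod_cast hnm
    simp only [hNdef, hMdef]; linarith
  set x₀ : ℝ := M - N with hx₀def
  set ε : ℝ := 1/N with hεdef
  have hε0 : 0 < ε := by positivity
  have hε1 : ε < 1 := by rw [hεdef, div_lt_one (by linarith)]; linarith
  have hεhalf : ε ≤ 1/2 := by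
    rw [hεdef]
    apply div_le_div_of_nonneg_left (by norm_num) (by norm_num) hN
  -- log of mu0
  have hfacpos := mu0_prod_pos n m hn2 hnm
  have hMε : (0:ℝ) < M - ε := by linarith
  have hlogmu : Real.log (mu0 1 n m) = Real.log (M - ε) +
      ∑ j ∈ Finset.range n, (Real.log (Real.Gamma (x₀ + 1 - ε + j))
        - Real.log (Real.Gamma (x₀ + 1 + j))) := by
    rw [mu0_one_eq n m hn2 hnm,
      Real.log_mul (ne_of_gt hMε) (ne_of_gt (Finset.prod_pos hfacpos)),
      Real.log_prod (fun j hj => ne_of_gt (hfacpos j hj))]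
    congr 1
    refine Finset.sum_congr rfl (fun j hj => ?_)
    have hj0 : (0:ℝ) ≤ (j:ℝ) := Nat.cast_nonneg j
    rw [Real.log_div (ne_of_gt (Real.Gamma_pos_of_pos (by linarith)))
      (ne_of_gt (Real.Gamma_pos_of_pos (by linarith)))]
  -- termwise bounds
  have hterm : ∀ j ∈ Finset.range n,
      (Real.log (Real.Gamma (x₀ + 1 - ε + j)) - Real.log (Real.Gamma (x₀ + 1 + j)))
        ≤ -(ε * Real.log (x₀ + j)) ∧
      -(ε * Real.log (x₀ + ((j:ℝ) + 1))) ≤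
        (Real.log (Real.Gamma (x₀ + 1 - ε + j)) - Real.log (Real.Gamma (x₀ + 1 + j))) := by
    intro j _
    have hj0 : (0:ℝ) ≤ (j:ℝ) := Nat.cast_nonneg j
    set x : ℝ := x₀ + 1 + j with hxdef
    have hx : 1 < x := by rw [hxdef]; linarith
    have hxe : x₀ + 1 - ε + j = x - ε := by rw [hxdef]; ring
    have h1 := logGamma_diff_le hx hε0 hε1
    have h2 := le_logGamma_diff hx hε0 hε1
    have hx1 : x - 1 = x₀ + j := by rw [hxdef]; ring
    have hlogle : Real.log (x - ε) ≤ Real.log (x₀ + ((j:ℝ) + 1)) := by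
      apply Real.log_le_log (by linarith) (by rw [hxdef]; linarith)
    have hmul : ε * Real.log (x - ε) ≤ ε * Real.log (x₀ + ((j:ℝ) + 1)) :=
      mul_le_mul_of_nonneg_left hlogle hε0.le
    constructor
    · rw [hxe, ← hx1]; linarith
    · rw [hxe]; linarith
  -- sum bounds
  set S := ∑ j ∈ Finset.range n, (Real.log (Real.Gamma (x₀ + 1 - ε + j))
      - Real.log (Real.Gamma (x₀ + 1 + j))) with hSdef
  set L := ∑ j ∈ Finset.range n, Real.log (x₀ + j) with hLdef
  have hSup : S ≤ -(ε * L) := by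
    calc S ≤ ∑ j ∈ Finset.range n, -(ε * Real.log (x₀ + j)) :=
          Finset.sum_le_sum (fun j hj => (hterm j hj).1)
      _ = -(ε * L) := by rw [hLdef, Finset.mul_sum, ← Finset.sum_neg_distrib]
  have hSlo : -(ε * (L + (Real.log M - Real.log x₀))) ≤ S := by
    have htel : ∑ j ∈ Finset.range n, Real.log (x₀ + ((j:ℝ) + 1))
        = L + (Real.log M - Real.log x₀) := by
      have h1 := Finset.sum_range_succ (fun j : ℕ => Real.log (x₀ + j)) n
      have h2 := Finset.sum_range_succ' (fun j : ℕ => Real.log (x₀ + j)) n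
      simp only [Nat.cast_zero, add_zero, Nat.cast_add, Nat.cast_one] at h1 h2
      have hM : x₀ + (n:ℝ) = M := by rw [hx₀def]; ring
      rw [hM] at h1
      rw [hLdef]
      linarith
    calc -(ε * (L + (Real.log M - Real.log x₀)))
        = ∑ j ∈ Finset.range n, -(ε * Real.log (x₀ + ((j:ℝ) + 1))) := by
          rw [← htel, Finset.mul_sum, ← Finset.sum_neg_distrib]
      _ ≤ S := Finset.sum_le_sum (fun j hj => (hterm j hj).2)
  -- integral comparison
  have hmono : MonotoneOn Real.log (Set.Icc x₀ (x₀ + n)) := fun a ha b hb hab =>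
    Real.log_le_log (by have := ha.1; linarith) hab
  have hIL : L ≤ ∫ x in x₀..x₀ + n, Real.log x := hmono.sum_le_integral
  have hIU : (∫ x in x₀..x₀ + n, Real.log x)
      ≤ ∑ j ∈ Finset.range n, Real.log (x₀ + ((j:ℝ) + 1)) := by
    have := hmono.integral_le_sum
    convert this using 2 with j
    push_cast
    ring_nf
  have hIval : (∫ x in x₀..x₀ + n, Real.log x)
      = M * Real.log M - x₀ * Real.log x₀ - N := by
    rw [integral_log]
    have hM : x₀ + (n:ℝ) = M := by rw [hx₀def]; ring
    rw [hM]
    rw [hx₀def]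
    ring
  set I := M * Real.log M - x₀ * Real.log x₀ - N with hIdef
  rw [hIval] at hIL hIU
  have htel2 : ∑ j ∈ Finset.range n, Real.log (x₀ + ((j:ℝ) + 1))
      = L + (Real.log M - Real.log x₀) := by
    have h1 := Finset.sum_range_succ (fun j : ℕ => Real.log (x₀ + j)) n
    have h2 := Finset.sum_range_succ' (fun j : ℕ => Real.log (x₀ + j)) n
    simp only [Nat.cast_zero, add_zero, Nat.cast_add, Nat.cast_one] at h1 h2
    have hM : x₀ + (n:ℝ) = M := by rw [hx₀def]; ring
    rw [hM] at h1
    rw [hLdef]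
    linarith
  rw [htel2] at hIU
  -- multiplied inequalities
  have hm1 : ε * L ≤ ε * I := mul_le_mul_of_nonneg_left hIL hε0.le
  have hm2 : ε * I ≤ ε * L + ε * (Real.log M - Real.log x₀) := by
    have := mul_le_mul_of_nonneg_left hIU hε0.le
    linarith [this, mul_add ε L (Real.log M - Real.log x₀)]
  have hd0 : 0 ≤ Real.log M - Real.log x₀ :=
    sub_nonneg.2 (Real.log_le_log (by linarith) (by linarith))
  -- final assembly
  rw [hlogmu]
  rw [abs_le]
  constructor
  · have : -(ε * (Real.log M - Real.log x₀)) ≤ S + ε * I := by linarith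
    simp only [hεdef, hx₀def, hMdef, hNdef] at this ⊢
    linarith
  · have : S + ε * I ≤ ε * (Real.log M - Real.log x₀) := by linarith
    simp only [hεdef, hx₀def, hMdef, hNdef] at this ⊢
    linarith

/-- limit of the mean of the GLRT statistic under `H₀` when
`n → ∞` and `n/m → c̄ ∈ (0,1)`. -/
theorem mu0_one_tendsto (n m : ℕ → ℕ) (hn0 : ∀ t, 0 < n t) (hnm : ∀ t, n t ≤ m t)
    (hn : Tendsto (fun t => (n t : ℝ)) atTop atTop)
    (c : ℝ) (hc : c ∈ Set.Ioo (0 : ℝ) 1)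
    (hratio : Tendsto (fun t => (n t : ℝ) / (m t : ℝ)) atTop (𝓝 c)) :
    Tendsto (fun t => mu0 1 (n t) (m t)) atTop
      (𝓝 (Real.exp 1 * (1 - c) ^ ((1 - c) / c))) := by
  obtain ⟨hc0, hc1⟩ := hc
  set A : ℝ := 1 + (1 - c)/c * Real.log (1 - c) with hAdef
  set G : ℕ → ℝ := fun t => Real.log ((m t : ℝ) - 1/(n t))
      - (1/(n t)) * ((m t : ℝ) * Real.log (m t)
        - ((m t : ℝ) - n t) * Real.log ((m t : ℝ) - n t) - (n t)) with hGdef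
  set d : ℕ → ℝ := fun t => (1/(n t : ℝ)) * (Real.log (m t) - Real.log ((m t : ℝ) - n t))
    with hddef
  -- basic eventualities
  have hev2 : ∀ᶠ t in atTop, 2 ≤ n t := by
    filter_upwards [hn.eventually_ge_atTop (2:ℝ)] with t ht
    exact_mod_cast ht
  have hevlt : ∀ᶠ t in atTop, n t < m t := by
    filter_upwards [hratio.eventually_lt_const (by linarith : c < (c+1)/2)] with t ht
    by_contra h
    push_neg at h
    have heq : n t = m t := le_antisymm (hnm t) h
    have hm0 : (0:ℝ) < (m t : ℝ) := by
      have := hn0 t; have := hnm t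
      exact_mod_cast Nat.lt_of_lt_of_le (hn0 t) (hnm t)
    rw [heq, div_self (ne_of_gt hm0)] at ht
    linarith
  -- auxiliary limits
  have hinv : Tendsto (fun t => 1/(n t : ℝ)) atTop (𝓝 0) := by
    simpa only [one_div, Function.comp_def] using tendsto_inv_atTop_zero.comp hn
  have hMN : Tendsto (fun t => (m t : ℝ)/(n t)) atTop (𝓝 c⁻¹) := by
    have := hratio.inv₀ (ne_of_gt hc0)
    exact this.congr (fun t => inv_div _ _)
  have h1NM : Tendsto (fun t => 1 - (n t : ℝ)/(m t)) atTop (𝓝 (1 - c)) :=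
    tendsto_const_nhds.sub hratio
  have hlog1c : Tendsto (fun t => Real.log (1 - (n t : ℝ)/(m t))) atTop
      (𝓝 (Real.log (1 - c))) :=
    ((Real.continuousAt_log (by linarith)).tendsto).comp h1NM
  have ht2 : Tendsto (fun t => ((m t : ℝ)/(n t) - 1) * Real.log (1 - (n t : ℝ)/(m t)))
      atTop (𝓝 ((c⁻¹ - 1) * Real.log (1 - c))) :=
    (hMN.sub tendsto_const_nhds).mul hlog1c
  have hnmat : Tendsto (fun t => (n t : ℝ) * (m t)) atTop atTop := by
    apply tendsto_atTop_mono _ hn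
    intro t
    have h1 : (1:ℝ) ≤ (m t : ℝ) := by exact_mod_cast Nat.lt_of_lt_of_le (hn0 t) (hnm t)
    nlinarith [(Nat.cast_nonneg (n t) : (0:ℝ) ≤ (n t))]
  have hinvnm : Tendsto (fun t => 1/((n t : ℝ) * (m t))) atTop (𝓝 0) := by
    simpa only [one_div, Function.comp_def] using tendsto_inv_atTop_zero.comp hnmat
  have ht1 : Tendsto (fun t => Real.log (((m t : ℝ) - 1/(n t))/(m t))) atTop (𝓝 0) := by
    have harg : Tendsto (fun t => ((m t : ℝ) - 1/(n t))/(m t)) atTop (𝓝 1) := by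
      have h0 : Tendsto (fun t => 1 - 1/((n t : ℝ) * (m t))) atTop (𝓝 1) := by
        simpa using tendsto_const_nhds.sub hinvnm
      apply h0.congr'
      filter_upwards [hev2, hevlt] with t h2 hlt
      have hN : (2:ℝ) ≤ (n t : ℝ) := by exact_mod_cast h2
      have hM : (1:ℝ) ≤ (m t : ℝ) := by exact_mod_cast Nat.lt_of_lt_of_le (hn0 t) (hnm t)
      field_simp
    have : Tendsto (fun x : ℝ => Real.log x) (𝓝 1) (𝓝 0) := by
      simpa using (Real.continuousAt_log one_ne_zero).tendsto
    exact this.comp harg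
  -- limit of G
  have hGlim : Tendsto G atTop (𝓝 A) := by
    have hsum : Tendsto (fun t => 1 + Real.log (((m t : ℝ) - 1/(n t))/(m t))
        + ((m t : ℝ)/(n t) - 1) * Real.log (1 - (n t : ℝ)/(m t))) atTop
        (𝓝 (1 + 0 + (c⁻¹ - 1) * Real.log (1 - c))) :=
      (tendsto_const_nhds.add ht1).add ht2
    have hval : 1 + 0 + (c⁻¹ - 1) * Real.log (1 - c) = A := by
      rw [hAdef]
      field_simp
      ring
    rw [hval] at hsum
    apply hsum.congr'
    filter_upwards [hev2, hevlt] with t h2 hlt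
    have hN : (2:ℝ) ≤ (n t : ℝ) := by exact_mod_cast h2
    have hM : (n t : ℝ) + 1 ≤ (m t : ℝ) := by exact_mod_cast hlt
    have hMpos : (0:ℝ) < (m t : ℝ) := by linarith
    have hMεpos : (0:ℝ) < (m t : ℝ) - 1/(n t) := by
      have : 1/(n t : ℝ) ≤ 1 := by
        rw [div_le_one (by linarith)]; linarith
      linarith
    have e1 : Real.log (((m t : ℝ) - 1/(n t))/(m t))
        = Real.log ((m t : ℝ) - 1/(n t)) - Real.log (m t) :=
      Real.log_div (ne_of_gt hMεpos) (ne_of_gt hMpos)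
    have e2 : Real.log (1 - (n t : ℝ)/(m t))
        = Real.log ((m t : ℝ) - n t) - Real.log (m t) := by
      rw [show 1 - (n t : ℝ)/(m t) = ((m t : ℝ) - n t)/(m t) by field_simp,
        Real.log_div (by linarith) (ne_of_gt hMpos)]
    rw [e1, e2, hGdef]
    have hNne : (n t : ℝ) ≠ 0 := by linarith
    field_simp
    ring
  -- limit of d
  have hdlim : Tendsto d atTop (𝓝 0) := by
    have h0 : Tendsto (fun t => (1/(n t : ℝ)) * (-(Real.log (1 - (n t : ℝ)/(m t)))))
        atTop (𝓝 (0 * (-(Real.log (1 - c))))) := hinv.mul hlog1c.neg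
    rw [zero_mul] at h0
    apply h0.congr'
    filter_upwards [hev2, hevlt] with t h2 hlt
    have hN : (2:ℝ) ≤ (n t : ℝ) := by exact_mod_cast h2
    have hM : (n t : ℝ) + 1 ≤ (m t : ℝ) := by exact_mod_cast hlt
    have hMpos : (0:ℝ) < (m t : ℝ) := by linarith
    have e2 : Real.log (1 - (n t : ℝ)/(m t))
        = Real.log ((m t : ℝ) - n t) - Real.log (m t) := by
      rw [show 1 - (n t : ℝ)/(m t) = ((m t : ℝ) - n t)/(m t) by field_simp,
        Real.log_div (by linarith) (ne_of_gt hMpos)]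
    rw [hddef, e2]
    ring
  -- squeeze
  have habs : ∀ᶠ t in atTop, ‖Real.log (mu0 1 (n t) (m t)) - G t‖ ≤ d t := by
    filter_upwards [hev2, hevlt] with t h2 hlt
    simpa [Real.norm_eq_abs, hGdef, hddef] using mu0_log_bound (n t) (m t) h2 hlt
  have hdiff : Tendsto (fun t => Real.log (mu0 1 (n t) (m t)) - G t) atTop (𝓝 0) :=
    squeeze_zero_norm' habs hdlim
  have hlogmu : Tendsto (fun t => Real.log (mu0 1 (n t) (m t))) atTop (𝓝 A) := by
    have h := hGlim.add hdiff
    rw [add_zero] at h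
    exact h.congr (fun t => by ring)
  have hexp : Tendsto (fun t => Real.exp (Real.log (mu0 1 (n t) (m t)))) atTop
      (𝓝 (Real.exp A)) := (Real.continuous_exp.tendsto A).comp hlogmu
  have hfin : Tendsto (fun t => mu0 1 (n t) (m t)) atTop (𝓝 (Real.exp A)) := by
    apply hexp.congr'
    filter_upwards [hev2, hevlt] with t h2 hlt
    exact Real.exp_log (mu0_pos (n t) (m t) h2 hlt)
  have hA : Real.exp A = Real.exp 1 * (1 - c) ^ ((1 - c) / c) := by
    rw [Real.rpow_def_of_pos (by linarith), ← Real.exp_add, hAdef]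
    congr 1
    ring
  rwa [hA] at hfin
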